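/- Let G be a finite non-cyclic group. Then the graph co-P_E(G*) has a dominating vertex (a vertex adjacent to all other vertices of co-P_E(G*)) if and only if G has a maximal cyclic subgroup of order 2. -/

import Mathlib

/-- A subgroup `M` of `G` is a maximal cyclic subgroup if it is cyclic and is not properly
contained in any cyclic subgroup of `G` other than itself. -/
def IsMaximalCyclic {G : Type*} [Group G] (M : Subgroup G) : Prop :=
  (∃ g : G, M = Subgroup.zpowers g) ∧
    ∀ K : Subgroup G, (∃ g : G, K = Subgroup.zpowers g) → M ≤ K → M = K

/-- The complement of the enhanced power graph of a group `G`: distinct `x, y` are adjacent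
iff no cyclic subgroup of `G` contains both. -/
def coPE (G : Type*) [Group G] : SimpleGraph G where
  Adj x y := x ≠ y ∧ ¬∃ z : G, x ∈ Subgroup.zpowers z ∧ y ∈ Subgroup.zpowers z
  symm := by
    refine ⟨?_⟩
    rintro x y ⟨h1, h2⟩
    exact ⟨h1.symm, fun ⟨z, hz⟩ => h2 ⟨z, hz.2, hz.1⟩⟩
  loopless := by refine ⟨?_⟩; rintro x ⟨h, -⟩; exact h rfl

/-- The set of non-isolated vertices of `coPE G`. -/
def nonIsolated (G : Type*) [Group G] : Set G := {x | ∃ y, (coPE G).Adj x y}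

/-- The subgraph of `coPE G` induced by its non-isolated vertices. -/
def coPEstar (G : Type*) [Group G] : SimpleGraph (nonIsolated G) :=
  (coPE G).induce (nonIsolated G)

/-- In a finite group every element lies in a maximal cyclic subgroup. -/
lemma exists_max_cyclic {G : Type*} [Group G] [Finite G] (g : G) :
    ∃ z : G, g ∈ Subgroup.zpowers z ∧
      ∀ w : G, Subgroup.zpowers z ≤ Subgroup.zpowers w →
        Subgroup.zpowers z = Subgroup.zpowers w := by
  classical
  set S : Set (Subgroup G) := {K | (∃ z : G, K = Subgroup.zpowers z) ∧ g ∈ K} with hS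
  have hfin : S.Finite := Set.toFinite S
  have hne : S.Nonempty := ⟨Subgroup.zpowers g, ⟨g, rfl⟩, Subgroup.mem_zpowers g⟩
  obtain ⟨K, hKS, hKmax⟩ := Set.Finite.exists_maximalFor id S hfin hne
  obtain ⟨⟨z, rfl⟩, hgK⟩ := hKS
  refine ⟨z, hgK, fun w hle => ?_⟩
  exact le_antisymm hle (hKmax ⟨⟨w, rfl⟩, hle hgK⟩ hle)

lemma one_isolated {G : Type*} [Group G] : (1 : G) ∉ nonIsolated G := by
  rintro ⟨y, hne, hz⟩
  exact hz ⟨y, Subgroup.one_mem _, Subgroup.mem_zpowers y⟩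

/-- If `x` generates a maximal cyclic subgroup and `x` is isolated, then `G` is cyclic. -/
lemma cyclic_of_isolated {G : Type*} [Group G] {x : G}
    (hmax : ∀ w : G, Subgroup.zpowers x ≤ Subgroup.zpowers w →
      Subgroup.zpowers x = Subgroup.zpowers w)
    (hiso : x ∉ nonIsolated G) : IsCyclic G := by
  refine ⟨⟨x, fun y => ?_⟩⟩
  by_cases hxy : x = y
  · exact hxy ▸ Subgroup.mem_zpowers x
  · have : ¬ (coPE G).Adj x y := fun h => hiso ⟨y, h⟩
    have hcom : ∃ z : G, x ∈ Subgroup.zpowers z ∧ y ∈ Subgroup.zpowers z := by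
      by_contra hc
      exact this ⟨hxy, hc⟩
    obtain ⟨z, hxz, hyz⟩ := hcom
    have hle : Subgroup.zpowers x ≤ Subgroup.zpowers z := Subgroup.zpowers_le.mpr hxz
    show y ∈ Subgroup.zpowers x
    rw [hmax z hle]
    exact hyz

lemma mem_of_order_two {G : Type*} [Group G] [Finite G] {g y : G} (h : orderOf g = 2)
    (hy : y ∈ Subgroup.zpowers g) : y = 1 ∨ y = g := by
  obtain ⟨n, hn⟩ := (mem_powers_iff_mem_zpowers.mpr hy)
  replace hn : g ^ n = y := hn
  have h2 : g ^ n = g ^ (n % 2) := by rw [← pow_mod_orderOf, h]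
  rcases Nat.mod_two_eq_zero_or_one n with h0 | h1
  · left; rw [← hn, h2, h0, pow_zero]
  · right; rw [← hn, h2, h1, pow_one]

theorem coPEstar_dominatable_iff {G : Type*} [Group G] [Finite G] (hG : ¬ IsCyclic G) :
    (∃ v : nonIsolated G, ∀ w : nonIsolated G, w ≠ v → (coPEstar G).Adj v w) ↔
      ∃ M : Subgroup G, IsMaximalCyclic M ∧ Nat.card M = 2 := by
  constructor
  · rintro ⟨v, hdom⟩
    obtain ⟨x, hxstar⟩ := v
    have hx1 : x ≠ 1 := by
      rintro rfl
      exact one_isolated hxstar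
    obtain ⟨z, hxz, hmax⟩ := exists_max_cyclic x
    -- Every generator of the maximal cyclic subgroup ⟨z⟩ equals x.
    have key : ∀ g : G, Subgroup.zpowers g = Subgroup.zpowers z → g = x := by
      intro g hg
      by_contra hne
      have hgiso : g ∉ nonIsolated G := by
        intro hgstar
        have hadj := hdom ⟨g, hgstar⟩ (by simp [Subtype.ext_iff, Ne, eq_comm] at hne ⊢; exact hne)
        have : ¬∃ u : G, x ∈ Subgroup.zpowers u ∧ g ∈ Subgroup.zpowers u := hadj.2
        exact this ⟨z, hxz, hg ▸ Subgroup.mem_zpowers g⟩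
      have hmax' : ∀ w : G, Subgroup.zpowers g ≤ Subgroup.zpowers w →
          Subgroup.zpowers g = Subgroup.zpowers w := by
        intro w hw
        rw [hg] at hw ⊢
        exact hmax w hw
      exact hG (cyclic_of_isolated hmax' hgiso)
    have hzx : z = x := key z rfl
    have hxmax : ∀ w : G, Subgroup.zpowers x ≤ Subgroup.zpowers w →
        Subgroup.zpowers x = Subgroup.zpowers w := by
      rw [← hzx]; exact hmax
    have hinv : x⁻¹ = x := key x⁻¹ (by rw [Subgroup.zpowers_inv, hzx])
    have hsq : x ^ 2 = 1 := by
      rw [pow_two]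
      nth_rewrite 2 [← hinv]
      exact mul_inv_cancel x
    haveI : Fact (Nat.Prime 2) := ⟨Nat.prime_two⟩
    have hord : orderOf x = 2 := orderOf_eq_prime hsq hx1
    refine ⟨Subgroup.zpowers x, ⟨⟨x, rfl⟩, ?_⟩, by rw [Nat.card_zpowers, hord]⟩
    rintro K ⟨w, rfl⟩ hle
    exact hxmax w hle
  · rintro ⟨M, ⟨⟨g, rfl⟩, hmaxK⟩, hcard⟩
    have hord : orderOf g = 2 := by rw [← Nat.card_zpowers]; exact hcard
    have hmax' : ∀ w : G, Subgroup.zpowers g ≤ Subgroup.zpowers w →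
        Subgroup.zpowers g = Subgroup.zpowers w := fun w hw => hmaxK _ ⟨w, rfl⟩ hw
    have hgstar : g ∈ nonIsolated G := by
      by_contra h
      exact hG (cyclic_of_isolated hmax' h)
    refine ⟨⟨g, hgstar⟩, fun w hw => ?_⟩
    have hwg : (w : G) ≠ g := fun h => hw (Subtype.ext h)
    refine ⟨fun h => hwg h.symm, ?_⟩
    rintro ⟨u, hgu, hwu⟩
    have hle : Subgroup.zpowers g ≤ Subgroup.zpowers u := Subgroup.zpowers_le.mpr hgu
    have heq := hmax' u hle
    have hwmem : (w : G) ∈ Subgroup.zpowers g := heq ▸ hwu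
    rcases mem_of_order_two hord hwmem with h1 | h1
    · exact (h1 ▸ one_isolated) w.2
    · exact hwg h1
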